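/- For every 0 ≤ j ≤ K and every 1 ≤ i ≤ n: τ^{(j)}(x_i) = x^{g_{i;j}}, where g_{i;j} is the i-th column of G_j; and τ^{(j)}((∏_{l=1}^n y_l^{c_{li;j}})·(∏_{l=1}^n x_l^{b_{li;j}})) = ŷ^{c_{i;j}}, where c_{i;j} denotes the i-th column of C_j and b_{li;j} the entries of B_j. -/

import Mathlib

noncomputable section

/-- Variables of the ambient field of a generalized cluster algebra of rank `n` with
mutation degrees `r`: cluster variables `x_i`, coefficients `y_i`, and `z_{i,s}` for
`1 ≤ s ≤ r_i - 1` (encoded by `Fin (r i - 1)`, the variable `z i t` standing for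
`z_{i, t+1}`). -/
inductive GVar (n : ℕ) (r : Fin n → ℕ) : Type where
  | x : Fin n → GVar n r
  | y : Fin n → GVar n r
  | z : (i : Fin n) → Fin (r i - 1) → GVar n r

/-- The ambient field: rational functions over `ℚ` in the variables `GVar n r`. -/
abbrev GF (n : ℕ) (r : Fin n → ℕ) : Type := FractionRing (MvPolynomial (GVar n r) ℚ)

/-- The variable `x_i` as an element of the field `GF n r`. -/
def Xv {n : ℕ} {r : Fin n → ℕ} (i : Fin n) : GF n r :=
  algebraMap (MvPolynomial (GVar n r) ℚ) (GF n r) (MvPolynomial.X (GVar.x i))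

/-- The variable `y_i` as an element of the field `GF n r`. -/
def Yv {n : ℕ} {r : Fin n → ℕ} (i : Fin n) : GF n r :=
  algebraMap (MvPolynomial (GVar n r) ℚ) (GF n r) (MvPolynomial.X (GVar.y i))

/-- The variable `z_{i,s+1}` (for `s : Fin (r i - 1)`) as an element of `GF n r`. -/
def Zv {n : ℕ} {r : Fin n → ℕ} (i : Fin n) (s : Fin (r i - 1)) : GF n r :=
  algebraMap (MvPolynomial (GVar n r) ℚ) (GF n r) (MvPolynomial.X (GVar.z i s))

/-- A rational constant as an element of `GF n r`. -/
def Qc {n : ℕ} {r : Fin n → ℕ} (a : ℚ) : GF n r :=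
  algebraMap (MvPolynomial (GVar n r) ℚ) (GF n r) (MvPolynomial.C a)

/-- `z_{i,s}` for `0 ≤ s ≤ r i`, with the convention `z_{i,0} = z_{i,r_i} = 1`. -/
def Zc {n : ℕ} (r : Fin n → ℕ) (i : Fin n) (s : ℕ) : GF n r :=
  if h : 0 < s ∧ s < r i then Zv i ⟨s - 1, by omega⟩ else 1

/-- `x^v = ∏ x_i^{v_i}` for `v ∈ ℤ^n`. -/
def xpow {n : ℕ} (r : Fin n → ℕ) (v : Fin n → ℤ) : GF n r :=
  ∏ i, Xv (r := r) i ^ v i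

/-- `ŷ_i = y_i·∏_j x_j^{b_{ji}}`. -/
def yhat {n : ℕ} (r : Fin n → ℕ) (B : Matrix (Fin n) (Fin n) ℤ) (i : Fin n) : GF n r :=
  Yv i * ∏ j, Xv (r := r) j ^ B j i

/-- `ŷ^v = ∏ ŷ_i^{v_i}` for `v ∈ ℤ^n`. -/
def yhatpow {n : ℕ} (r : Fin n → ℕ) (B : Matrix (Fin n) (Fin n) ℤ) (v : Fin n → ℤ) :
    GF n r :=
  ∏ i, yhat r B i ^ v i

/-- For the tropical parts `τ_j` of the mutations of a generalized
cluster pattern with principal coefficients, the composite `τ^{(j)} = τ_1∘⋯∘τ_j`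
satisfies `τ^{(j)}(x_i) = x^{g_{i;j}}` and
`τ^{(j)}((∏ y_l^{c_{li;j}})·(∏ x_l^{b_{li;j}})) = ŷ^{c_{i;j}}` for all `0 ≤ j ≤ K`. -/
lemma Xv_ne_zero {n : ℕ} {r : Fin n → ℕ} (i : Fin n) : (Xv (r := r) i) ≠ 0 := by
  unfold Xv
  intro h
  exact MvPolynomial.X_ne_zero (GVar.x i)
    ((map_eq_zero_iff _ (IsFractionRing.injective (MvPolynomial (GVar n r) ℚ) (GF n r))).mp h)

lemma zpow_finsum {K : Type*} [Field K] {x : K} (hx : x ≠ 0) {α : Type*} (s : Finset α)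
    (f : α → ℤ) : x ^ (∑ a ∈ s, f a) = ∏ a ∈ s, x ^ f a := by
  classical
  induction s using Finset.induction with
  | empty => simp
  | insert _ _ h ih => rw [Finset.sum_insert h, Finset.prod_insert h, zpow_add₀ hx, ih]

lemma xpow_mul_xpow {n : ℕ} (r : Fin n → ℕ) (v w : Fin n → ℤ) :
    xpow r v * xpow r w = xpow r (fun i => v i + w i) := by
  unfold xpow
  rw [← Finset.prod_mul_distrib]
  exact Finset.prod_congr rfl fun i _ => (zpow_add₀ (Xv_ne_zero i) _ _).symm

lemma xpow_inv {n : ℕ} (r : Fin n → ℕ) (v : Fin n → ℤ) :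
    (xpow r v)⁻¹ = xpow r (fun i => -(v i)) := by
  unfold xpow
  rw [← Finset.prod_inv_distrib]
  exact Finset.prod_congr rfl fun i _ => (zpow_neg _ _).symm

lemma prod_xpow_zpow {n : ℕ} (r : Fin n → ℕ) (v : Fin n → Fin n → ℤ) (c : Fin n → ℤ) :
    ∏ l, (xpow r (v l)) ^ c l = xpow r (fun i => ∑ l, v l i * c l) := by
  unfold xpow
  calc ∏ l, (∏ i, Xv (r := r) i ^ v l i) ^ c l
      = ∏ l, ∏ i, Xv (r := r) i ^ (v l i * c l) := by
        refine Finset.prod_congr rfl fun l _ => ?_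
        rw [← Finset.prod_zpow]
        exact Finset.prod_congr rfl fun i _ => (zpow_mul _ _ _).symm
    _ = ∏ i, ∏ l, Xv (r := r) i ^ (v l i * c l) := Finset.prod_comm
    _ = ∏ i, Xv (r := r) i ^ (∑ l, v l i * c l) :=
        Finset.prod_congr rfl fun i _ => (zpow_finsum (Xv_ne_zero i) _ _).symm

lemma max_neg_mul_natCast (a : ℤ) (m : ℕ) : max (-(a * m)) 0 = max (-a) 0 * m := by
  rcases le_total a 0 with h | h
  · rw [max_eq_left, max_eq_left] <;> nlinarith [Int.ofNat_nonneg m]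
  · rw [max_eq_right, max_eq_right] <;> nlinarith [Int.ofNat_nonneg m]

theorem stmt_8 (n K : ℕ) (hn : 1 ≤ n) (r : Fin n → ℕ) (hr : ∀ i, 0 < r i)
    (B₀ : Matrix (Fin n) (Fin n) ℤ)
    (D₀ : Fin n → ℤ) (hD₀ : ∀ i, 0 < D₀ i)
    (hskew : ∀ i j, D₀ i * (r i : ℤ) * B₀ i j = -(D₀ j * (r j : ℤ) * B₀ j i))
    (idx : ℕ → Fin n) (ε : ℕ → ℤ)
    (hε : ∀ j < K, ε (j + 1) = 1 ∨ ε (j + 1) = -1)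
    (B C G : ℕ → Matrix (Fin n) (Fin n) ℤ)
    (hB0 : B 0 = B₀) (hC0 : C 0 = 1) (hG0 : G 0 = 1)
    -- at each step the c-vector is nonzero and sign-coherent with common sign ε_j
    (hcv : ∀ j < K, (∃ l, C j l (idx (j + 1)) ≠ 0) ∧
      ∀ l, 0 ≤ ε (j + 1) * C j l (idx (j + 1)))
    (hB : ∀ j < K, ∀ (a b : Fin n),
      B (j + 1) a b =
        if a = idx (j + 1) ∨ b = idx (j + 1) then -(B j a b)
        else B j a b + (r (idx (j + 1)) : ℤ) *
          (max (-(B j a (idx (j + 1)))) 0 * B j (idx (j + 1)) b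
            + B j a (idx (j + 1)) * max (B j (idx (j + 1)) b) 0))
    (hC : ∀ j < K, ∀ (a b : Fin n),
      C (j + 1) a b =
        if b = idx (j + 1) then -(C j a b)
        else C j a b + (r (idx (j + 1)) : ℤ) *
          (C j a (idx (j + 1)) * max (ε (j + 1) * B j (idx (j + 1)) b) 0
            + max (-(ε (j + 1) * C j a (idx (j + 1)))) 0 * B j (idx (j + 1)) b))
    (hG : ∀ j < K, ∀ (l i : Fin n),
      G (j + 1) l i =
        if i = idx (j + 1) then
          -(G j l i) + (r (idx (j + 1)) : ℤ) *
            ∑ p, max (-(ε (j + 1) * B j p (idx (j + 1)))) 0 * G j l p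
        else G j l i)
    (τ : ℕ → (GF n r →+* GF n r))
    (hτ0 : ∀ j < K, ∀ a : ℚ, τ (j + 1) (Qc a) = Qc a)
    (hτy : ∀ j < K, ∀ i, τ (j + 1) (Yv i) = Yv i)
    (hτz : ∀ j < K, ∀ i s, τ (j + 1) (Zv i s) = Zv i s)
    (hτx : ∀ j < K, ∀ i, i ≠ idx (j + 1) → τ (j + 1) (Xv i) = Xv i)
    (hτxk : ∀ j < K, τ (j + 1) (Xv (idx (j + 1))) =
      (Xv (idx (j + 1)) : GF n r)⁻¹ *
        ∏ l, Xv l ^ max (-(ε (j + 1) * B j l (idx (j + 1)) * (r (idx (j + 1)) : ℤ))) 0)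
    (T : ℕ → (GF n r →+* GF n r))
    (hT0 : T 0 = RingHom.id _)
    (hT : ∀ j < K, T (j + 1) = (T j).comp (τ (j + 1))) :
    ∀ j ≤ K, ∀ i,
      T j (Xv i) = xpow r (fun l => G j l i) ∧
      T j ((∏ l, Yv (r := r) l ^ C j l i) * ∏ l, Xv (r := r) l ^ B j l i) =
        yhatpow r B₀ (fun l => C j l i) := by
  have hw : ∀ a : Fin n, (0:ℤ) < D₀ a * (r a : ℤ) :=
    fun a => mul_pos (hD₀ a) (by exact_mod_cast hr a)
  have hskewJ : ∀ j ≤ K, ∀ a b, D₀ a * (r a : ℤ) * B j a b = -(D₀ b * (r b : ℤ) * B j b a) := by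
    intro j
    induction j with
    | zero => intro _ a b; rw [hB0]; exact hskew a b
    | succ j ih =>
      intro hj a b
      have hjK : j < K := by omega
      have IH := ih (by omega)
      rw [hB j hjK a b, hB j hjK b a]
      by_cases hor : a = idx (j + 1) ∨ b = idx (j + 1)
      · rw [if_pos hor, if_pos (Or.symm hor)]
        have := IH a b
        ring_nf
        ring_nf at this
        linarith
      · push_neg at hor
        rw [if_neg (by tauto), if_neg (by tauto)]
        set k := idx (j + 1) with hk
        have sgn : ∀ x y : Fin n, 0 ≤ B j x y → B j y x ≤ 0 := by
          intro x y h
          nlinarith [hw x, hw y, IH x y, mul_nonneg (hw x).le h]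
        have sgn' : ∀ x y : Fin n, B j x y ≤ 0 → 0 ≤ B j y x := by
          intro x y h
          nlinarith [hw x, hw y, IH x y, mul_nonpos_of_nonneg_of_nonpos (hw x).le h]
        have h1 := IH a k
        have h2 := IH k b
        have h3 := IH a b
        have key : D₀ a * (r a : ℤ) * (B j a k * B j k b)
            = D₀ b * (r b : ℤ) * (B j b k * B j k a) := by
          linear_combination (B j k b) * h1 - (B j k a) * h2
        have hA : D₀ a * (r a : ℤ) *
              (max (-(B j a k)) 0 * B j k b + B j a k * max (B j k b) 0)
            = -(D₀ b * (r b : ℤ) *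
              (max (-(B j b k)) 0 * B j k a + B j b k * max (B j k a) 0)) := by
          rcases le_total 0 (B j a k) with h4 | h4 <;> rcases le_total 0 (B j k b) with h5 | h5
          · have h6 : B j k a ≤ 0 := sgn a k h4
            have h7 : B j b k ≤ 0 := sgn k b h5
            rw [show max (-(B j a k)) 0 = 0 by omega, show max (B j k b) 0 = B j k b by omega,
              show max (-(B j b k)) 0 = -(B j b k) by omega, show max (B j k a) 0 = 0 by omega]
            linear_combination key
          · have h6 : B j k a ≤ 0 := sgn a k h4
            have h7 : 0 ≤ B j b k := sgn' k b h5
            rw [show max (-(B j a k)) 0 = 0 by omega, show max (B j k b) 0 = 0 by omega,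
              show max (-(B j b k)) 0 = 0 by omega, show max (B j k a) 0 = 0 by omega]
            ring
          · have h6 : 0 ≤ B j k a := sgn' a k h4
            have h7 : B j b k ≤ 0 := sgn k b h5
            rw [show max (-(B j a k)) 0 = -(B j a k) by omega,
              show max (B j k b) 0 = B j k b by omega,
              show max (-(B j b k)) 0 = -(B j b k) by omega,
              show max (B j k a) 0 = B j k a by omega]
            ring
          · have h6 : 0 ≤ B j k a := sgn' a k h4
            have h7 : 0 ≤ B j b k := sgn' k b h5
            rw [show max (-(B j a k)) 0 = -(B j a k) by omega, show max (B j k b) 0 = 0 by omega,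
              show max (-(B j b k)) 0 = 0 by omega, show max (B j k a) 0 = B j k a by omega]
            linear_combination -key
        linear_combination h3 + (r k : ℤ) * hA
  have hdiag : ∀ j ≤ K, ∀ a, B j a a = 0 := by
    intro j hj a
    have h := hskewJ j hj a a
    have h0 : D₀ a * (r a : ℤ) * B j a a = 0 := by linarith
    exact (mul_eq_zero.mp h0).resolve_left (ne_of_gt (hw a))
  have hmat : ∀ j ≤ K, ∀ l i, ∑ a, B₀ l a * C j a i = ∑ a, G j l a * B j a i := by
    intro j
    induction j with
    | zero =>
      intro _ l i
      simp [hC0, hG0, hB0, Matrix.one_apply, mul_ite, ite_mul]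
    | succ j ih =>
      intro hj l i
      have hjK : j < K := by omega
      have IH := ih (by omega)
      have hBkk : B j (idx (j + 1)) (idx (j + 1)) = 0 := hdiag j (by omega) _
      have hsplit : ∀ f : Fin n → ℤ, ∑ a, f a = f (idx (j + 1)) + ∑ a ∈ Finset.univ.erase (idx (j + 1)), f a :=
        fun f => (Finset.add_sum_erase _ f (Finset.mem_univ (idx (j + 1)))).symm
      by_cases hik : i = (idx (j + 1))
      · have eL : ∀ a : Fin n, B₀ l a * C (j + 1) a i = -(B₀ l a * C j a i) := by
          intro a; rw [hC j hjK a i, if_pos hik]; ring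
        have eR : ∀ a : Fin n, G (j + 1) l a * B (j + 1) a i = -(G j l a * B j a i) := by
          intro a
          rw [hB j hjK a i, if_pos (Or.inr hik)]
          by_cases hak : a = (idx (j + 1))
          · rw [hG j hjK l a, if_pos hak, hak, hik, hBkk]; ring
          · rw [hG j hjK l a, if_neg hak]; ring
        simp only [eL, eR]
        simp only [Finset.sum_neg_distrib]
        rw [IH l i]
      · have hcoh : ∀ a : Fin n, max (-(ε (j + 1) * C j a (idx (j + 1)))) 0 = 0 := by
          intro a; have := (hcv j hjK).2 a; omega
        have eL : ∀ a : Fin n, B₀ l a * C (j + 1) a i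
            = B₀ l a * C j a i
              + (r (idx (j + 1)) : ℤ) * max (ε (j + 1) * B j (idx (j + 1)) i) 0 * (B₀ l a * C j a (idx (j + 1))) := by
          intro a
          rw [hC j hjK a i, if_neg hik, hcoh a]
          ring
        have eLs : ∑ a, B₀ l a * C (j + 1) a i
            = ∑ a, B₀ l a * C j a i
              + (r (idx (j + 1)) : ℤ) * max (ε (j + 1) * B j (idx (j + 1)) i) 0 * ∑ a, B₀ l a * C j a (idx (j + 1)) := by
          simp only [eL]
          rw [Finset.sum_add_distrib, ← Finset.mul_sum]
        have hGk : G (j + 1) l (idx (j + 1))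
            = -(G j l (idx (j + 1))) + (r (idx (j + 1)) : ℤ) * ∑ p, max (-(ε (j + 1) * B j p (idx (j + 1)))) 0 * G j l p := by
          rw [hG j hjK l (idx (j + 1)), if_pos rfl]
        have hBki : B (j + 1) (idx (j + 1)) i = -(B j (idx (j + 1)) i) := by
          rw [hB j hjK (idx (j + 1)) i, if_pos (Or.inl rfl)]
        have eR : ∀ a ∈ Finset.univ.erase (idx (j + 1)), G (j + 1) l a * B (j + 1) a i
            = G j l a * B j a i
              + (r (idx (j + 1)) : ℤ) * B j (idx (j + 1)) i * (max (-(B j a (idx (j + 1)))) 0 * G j l a)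
              + (r (idx (j + 1)) : ℤ) * max (B j (idx (j + 1)) i) 0 * (G j l a * B j a (idx (j + 1))) := by
          intro a ha
          have hak : a ≠ (idx (j + 1)) := (Finset.mem_erase.mp ha).1
          rw [hG j hjK l a, if_neg hak, hB j hjK a i, if_neg (by tauto)]
          ring
        have hS : (∑ p, max (-(ε (j + 1) * B j p (idx (j + 1)))) 0 * G j l p)
            = ∑ p ∈ Finset.univ.erase (idx (j + 1)), max (-(ε (j + 1) * B j p (idx (j + 1)))) 0 * G j l p := by
          rw [hsplit (fun p => max (-(ε (j + 1) * B j p (idx (j + 1)))) 0 * G j l p), hBkk]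
          simp
        have eRs : ∑ a, G (j + 1) l a * B (j + 1) a i
            = (-(G j l (idx (j + 1)))
                + (r (idx (j + 1)) : ℤ) * ∑ p ∈ Finset.univ.erase (idx (j + 1)),
                    max (-(ε (j + 1) * B j p (idx (j + 1)))) 0 * G j l p) * (-(B j (idx (j + 1)) i))
              + (∑ a ∈ Finset.univ.erase (idx (j + 1)), G j l a * B j a i
                + (r (idx (j + 1)) : ℤ) * B j (idx (j + 1)) i
                    * ∑ a ∈ Finset.univ.erase (idx (j + 1)), max (-(B j a (idx (j + 1)))) 0 * G j l a
                + (r (idx (j + 1)) : ℤ) * max (B j (idx (j + 1)) i) 0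
                    * ∑ a ∈ Finset.univ.erase (idx (j + 1)), G j l a * B j a (idx (j + 1))) := by
          rw [hsplit (fun a => G (j + 1) l a * B (j + 1) a i), hGk, hBki, hS]
          congr 1
          rw [Finset.sum_congr rfl eR, Finset.sum_add_distrib, Finset.sum_add_distrib,
            ← Finset.mul_sum, ← Finset.mul_sum]
        have eUi : ∑ a, G j l a * B j a i
            = G j l (idx (j + 1)) * B j (idx (j + 1)) i + ∑ a ∈ Finset.univ.erase (idx (j + 1)), G j l a * B j a i :=
          hsplit _
        have eVk : ∑ a, G j l a * B j a (idx (j + 1))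
            = ∑ a ∈ Finset.univ.erase (idx (j + 1)), G j l a * B j a (idx (j + 1)) := by
          rw [hsplit (fun a => G j l a * B j a (idx (j + 1))), hBkk, mul_zero, zero_add]
        rw [eLs, eRs, IH l i, IH l (idx (j + 1)), eUi, eVk]
        rcases hε j hjK with hε1 | hε1
        · simp only [hε1, one_mul]
          ring
        · simp only [hε1, neg_mul, one_mul, neg_neg]
          have hQ : ∑ a ∈ Finset.univ.erase (idx (j + 1)), max (-(B j a (idx (j + 1)))) 0 * G j l a
              = ∑ a ∈ Finset.univ.erase (idx (j + 1)), max (B j a (idx (j + 1))) 0 * G j l a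
                - ∑ a ∈ Finset.univ.erase (idx (j + 1)), G j l a * B j a (idx (j + 1)) := by
            rw [← Finset.sum_sub_distrib]
            refine Finset.sum_congr rfl fun a _ => ?_
            rw [show max (-(B j a (idx (j + 1)))) 0 = max (B j a (idx (j + 1))) 0 - B j a (idx (j + 1)) by omega]
            ring
          rw [hQ, show max (-(B j (idx (j + 1)) i)) 0 = max (B j (idx (j + 1)) i) 0 - B j (idx (j + 1)) i by omega]
          ring
  have hTy : ∀ j ≤ K, ∀ l, T j (Yv (r := r) l) = Yv l := by
    intro j
    induction j with
    | zero => intro _ l; rw [hT0]; rfl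
    | succ j ih =>
      intro hj l
      have hjK : j < K := by omega
      rw [hT j hjK, RingHom.comp_apply, hτy j hjK]
      exact ih (by omega) l
  have hTX : ∀ j ≤ K, ∀ i, T j (Xv (r := r) i) = xpow r (fun l => G j l i) := by
    intro j
    induction j with
    | zero =>
      intro _ i
      rw [hT0]
      show Xv i = xpow r (fun l => G 0 l i)
      unfold xpow
      rw [Finset.prod_eq_single i (fun b _ hb => by simp [hG0, Matrix.one_apply, hb])
        (by simp)]
      simp [hG0, Matrix.one_apply]
    | succ j ih =>
      intro hj i
      have hjK : j < K := by omega
      have IH := ih (by omega)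
      rw [hT j hjK, RingHom.comp_apply]
      by_cases hik : i = idx (j + 1)
      · rw [hik, hτxk j hjK]
        rw [map_mul, map_inv₀, map_prod]
        simp only [map_zpow₀]
        simp only [IH]
        rw [xpow_inv, prod_xpow_zpow r (fun l a => G j a l)
          (fun l => max (-(ε (j + 1) * B j l (idx (j + 1)) * (r (idx (j + 1)) : ℤ))) 0),
          xpow_mul_xpow]
        congr 1
        funext a
        rw [hG j hjK a (idx (j + 1)), if_pos rfl]
        have e1 : ∀ l : Fin n,
            G j a l * max (-(ε (j + 1) * B j l (idx (j + 1)) * (r (idx (j + 1)) : ℤ))) 0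
            = (r (idx (j + 1)) : ℤ) * (max (-(ε (j + 1) * B j l (idx (j + 1)))) 0 * G j a l) := by
          intro l; rw [max_neg_mul_natCast]; ring
        simp only [e1]
        rw [← Finset.mul_sum]
      · rw [hτx j hjK i hik, IH i]
        congr 1
        funext l
        rw [hG j hjK l i, if_neg hik]
  intro j hj i
  refine ⟨hTX j hj i, ?_⟩
  calc T j ((∏ l, Yv (r := r) l ^ C j l i) * ∏ l, Xv (r := r) l ^ B j l i)
      = (∏ l, Yv (r := r) l ^ C j l i) * ∏ l, (xpow r (fun a => G j a l)) ^ B j l i := by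
        rw [map_mul, map_prod, map_prod]
        simp only [map_zpow₀, hTy j hj, hTX j hj]
    _ = (∏ l, Yv (r := r) l ^ C j l i) * xpow r (fun a => ∑ l, G j a l * B j l i) := by
        rw [prod_xpow_zpow r (fun l a => G j a l) (fun l => B j l i)]
    _ = (∏ l, Yv (r := r) l ^ C j l i) * xpow r (fun a => ∑ l, B₀ a l * C j l i) :=
        congrArg _ (congrArg _ (funext fun a => (hmat j hj a i).symm))
    _ = yhatpow r B₀ (fun l => C j l i) := by
        unfold yhatpow yhat
        have e2 : ∀ l : Fin n, (Yv (r := r) l * ∏ a, Xv (r := r) a ^ B₀ a l) ^ C j l i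
            = Yv (r := r) l ^ C j l i * (xpow r (fun a => B₀ a l)) ^ C j l i :=
          fun l => mul_zpow _ _ _
        simp only [e2]
        rw [Finset.prod_mul_distrib, prod_xpow_zpow r (fun l a => B₀ a l) (fun l => C j l i)]
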